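/- arXiv:1804.06187 — 4 statements merged into one kernel-verified Lean document; each statement's English description precedes it below -/
import Mathlib

section
/- Fréchet–Hoeffding bounds for the conjunction of two conditional events: for events A, H, B, K with P(H) > 0 and P(K) > 0, the prevision z of the conjunction ⟦(A|H)∧(B|K)⟧ satisfies max(P(A|H) + P(B|K) − 1, 0) ≤ z ≤ min(P(A|H), P(B|K)). -/
open MeasureTheory Set
open scoped Classical

noncomputable section

variable {Ω : Type*} [MeasurableSpace Ω]

/-- Indicator (with values in `ℝ`) of a set. -/
def ind (A : Set Ω) : Ω → ℝ := A.indicator 1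

/-- Conditional probability `P(A|H) = P(A ∩ H)/P(H)`. -/
def condProb (P : Measure Ω) (A H : Set Ω) : ℝ :=
  (P (A ∩ H)).toReal / (P H).toReal

/-- The (indicator of the) conditional event `A|H`,
`⟦A|H⟧ = 1_{A∩H} + P(A|H)·1_{Hᶜ}`. -/
def condEvent (P : Measure Ω) (A H : Set Ω) : Ω → ℝ :=
  fun ω => ind (A ∩ H) ω + condProb P A H * ind Hᶜ ω

/-- The prevision `z` of the conjunction `(A|H) ∧ (B|K)`:
`z = E[min(⟦A|H⟧, ⟦B|K⟧)·1_{H∪K}]/P(H∪K)`. -/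
def conjPrev (P : Measure Ω) (A H B K : Set Ω) : ℝ :=
  (∫ ω, min (condEvent P A H ω) (condEvent P B K ω) * ind (H ∪ K) ω ∂P) /
    (P (H ∪ K)).toReal

/-- The conjunction `⟦(A|H) ∧ (B|K)⟧ = min(⟦A|H⟧, ⟦B|K⟧)·1_{H∪K} + z·1_{(H∪K)ᶜ}`. -/
def conjCE (P : Measure Ω) (A H B K : Set Ω) : Ω → ℝ :=
  fun ω => min (condEvent P A H ω) (condEvent P B K ω) * ind (H ∪ K) ω
    + conjPrev P A H B K * ind (H ∪ K)ᶜ ω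

/-- The iterated conditional `⟦(B|K)|(A|H)⟧ = ⟦(A|H)∧(B|K)⟧ + μ·(1 − ⟦A|H⟧)`,
with `μ = z / P(A|H)`. -/
def iterCond (P : Measure Ω) (A H B K : Set Ω) : Ω → ℝ :=
  fun ω => conjCE P A H B K ω +
    (conjPrev P A H B K / condProb P A H) * (1 - condEvent P A H ω)

/-- Goodman–Nguyen logical implication between conditional events:
`A|H ⊑ B|K` iff `A∩H ⊆ B∩K` and `Bᶜ∩K ⊆ Aᶜ∩H`. -/
def GNle (A H B K : Set Ω) : Prop := A ∩ H ⊆ B ∩ K ∧ Bᶜ ∩ K ⊆ Aᶜ ∩ H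


section Aux

variable {Ω : Type*} [MeasurableSpace Ω]

lemma ind_apply (A : Set Ω) (ω : Ω) : ind A ω = if ω ∈ A then 1 else 0 := by
  simp [ind, Set.indicator_apply]

lemma ind_nonneg (A : Set Ω) (ω : Ω) : 0 ≤ ind A ω := by
  rw [ind_apply]; split <;> norm_num

lemma ind_le_one (A : Set Ω) (ω : Ω) : ind A ω ≤ 1 := by
  rw [ind_apply]; split <;> norm_num

lemma ind_mul (A B : Set Ω) (ω : Ω) : ind A ω * ind B ω = ind (A ∩ B) ω := by
  simp only [ind_apply, Set.mem_inter_iff]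
  by_cases h1 : ω ∈ A <;> by_cases h2 : ω ∈ B <;> simp [h1, h2]

lemma measurable_ind {A : Set Ω} (hA : MeasurableSet A) : Measurable (ind A) :=
  measurable_one.indicator hA

lemma integrable_ind (P : Measure Ω) [IsFiniteMeasure P] {A : Set Ω}
    (hA : MeasurableSet A) : Integrable (ind A) P :=
  (integrable_const (1 : ℝ)).indicator hA

lemma integral_ind (P : Measure Ω) [IsFiniteMeasure P] {A : Set Ω}
    (hA : MeasurableSet A) : ∫ ω, ind A ω ∂P = (P A).toReal := by
  simp [ind, integral_indicator_one hA, measureReal_def]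

lemma condProb_nonneg (P : Measure Ω) (A H : Set Ω) : 0 ≤ condProb P A H :=
  div_nonneg ENNReal.toReal_nonneg ENNReal.toReal_nonneg

lemma condProb_le_one (P : Measure Ω) [IsFiniteMeasure P] {A H : Set Ω}
    (hH : 0 < P H) : condProb P A H ≤ 1 := by
  have h1 : 0 < (P H).toReal := ENNReal.toReal_pos hH.ne' (measure_ne_top P H)
  rw [condProb, div_le_one h1]
  exact (ENNReal.toReal_le_toReal (measure_ne_top _ _) (measure_ne_top _ _)).mpr
    (measure_mono inter_subset_right)

lemma condEvent_nonneg (P : Measure Ω) (A H : Set Ω) (ω : Ω) :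
    0 ≤ condEvent P A H ω :=
  add_nonneg (ind_nonneg _ _) (mul_nonneg (condProb_nonneg _ _ _) (ind_nonneg _ _))

lemma condEvent_le_one (P : Measure Ω) [IsFiniteMeasure P] {A H : Set Ω}
    (hH : 0 < P H) (ω : Ω) : condEvent P A H ω ≤ 1 := by
  by_cases h : ω ∈ H
  · have h2 : ind Hᶜ ω = 0 := by simp [ind_apply, h]
    simpa [condEvent, h2] using ind_le_one (A ∩ H) ω
  · have h1 : ind (A ∩ H) ω = 0 := by simp [ind_apply, h]
    have h2 : ind Hᶜ ω = 1 := by simp [ind_apply, h]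
    simpa [condEvent, h1, h2] using condProb_le_one P hH

lemma measurable_condEvent (P : Measure Ω) {A H : Set Ω}
    (hAm : MeasurableSet A) (hHm : MeasurableSet H) :
    Measurable (condEvent P A H) :=
  (measurable_ind (hAm.inter hHm)).add ((measurable_ind hHm.compl).const_mul _)

lemma integral_condEvent (P : Measure Ω) [IsProbabilityMeasure P] {A H K : Set Ω}
    (hAm : MeasurableSet A) (hHm : MeasurableSet H) (hKm : MeasurableSet K)
    (hH : 0 < P H) :
    ∫ ω, condEvent P A H ω * ind (H ∪ K) ω ∂P
      = condProb P A H * (P (H ∪ K)).toReal := by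
  have hPH : (P H).toReal ≠ 0 :=
    (ENNReal.toReal_pos hH.ne' (measure_ne_top P H)).ne'
  have key : ∀ ω, condEvent P A H ω * ind (H ∪ K) ω
      = ind (A ∩ H) ω + condProb P A H * ind (Hᶜ ∩ K) ω := by
    intro ω
    have h1 : (A ∩ H) ∩ (H ∪ K) = A ∩ H := by ext x; simp; tauto
    have h2 : Hᶜ ∩ (H ∪ K) = Hᶜ ∩ K := by ext x; simp; tauto
    simp only [condEvent, add_mul, mul_assoc, ind_mul, h1, h2]
  simp only [key]
  rw [integral_add (integrable_ind P (hAm.inter hHm))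
      ((integrable_ind P (hHm.compl.inter hKm)).const_mul _),
    integral_const_mul, integral_ind P (hAm.inter hHm),
    integral_ind P (hHm.compl.inter hKm)]
  have hsplit : P (H ∪ K) = P H + P (Hᶜ ∩ K) := by
    rw [show H ∪ K = H ∪ (Hᶜ ∩ K) by ext x; simp; tauto]
    exact measure_union (disjoint_left.mpr fun x hx hx2 => hx2.1 hx)
      (hHm.compl.inter hKm)
  have hPA : condProb P A H * (P H).toReal = (P (A ∩ H)).toReal := by
    rw [condProb, div_mul_cancel₀ _ hPH]
  rw [hsplit, ENNReal.toReal_add (measure_ne_top _ _) (measure_ne_top _ _),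
    mul_add, hPA]

end Aux

/-- Fréchet–Hoeffding bounds for the prevision of the conjunction of two
conditional events. -/
theorem frechet_hoeffding_bounds (P : Measure Ω) [IsProbabilityMeasure P]
    (A H B K : Set Ω)
    (hAm : MeasurableSet A) (hHm : MeasurableSet H)
    (hBm : MeasurableSet B) (hKm : MeasurableSet K)
    (hH : 0 < P H) (hK : 0 < P K) :
    max (condProb P A H + condProb P B K - 1) 0 ≤ conjPrev P A H B K ∧
      conjPrev P A H B K ≤ min (condProb P A H) (condProb P B K) := by
  set X := condEvent P A H with hX
  set Y := condEvent P B K with hY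
  set S := H ∪ K with hS
  have hSm : MeasurableSet S := hHm.union hKm
  have hc : 0 < (P S).toReal :=
    ENNReal.toReal_pos ((lt_of_lt_of_le hH (measure_mono subset_union_left)).ne')
      (measure_ne_top P S)
  have hXm : Measurable X := measurable_condEvent P hAm hHm
  have hYm : Measurable Y := measurable_condEvent P hBm hKm
  have hX0 : ∀ ω, 0 ≤ X ω := condEvent_nonneg P A H
  have hY0 : ∀ ω, 0 ≤ Y ω := condEvent_nonneg P B K
  have hX1 : ∀ ω, X ω ≤ 1 := condEvent_le_one P hH
  have hY1 : ∀ ω, Y ω ≤ 1 := condEvent_le_one P hK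
  -- integrability helpers
  have bound : ∀ (f : Ω → ℝ), Measurable f → (∀ ω, 0 ≤ f ω) → (∀ ω, f ω ≤ 1) →
      Integrable (fun ω => f ω * ind S ω) P := by
    intro f hf hf0 hf1
    refine (integrable_ind P hSm).mono' ((hf.mul (measurable_ind hSm)).aestronglyMeasurable) ?_
    filter_upwards with ω
    rw [Real.norm_eq_abs, abs_mul, abs_of_nonneg (hf0 ω), abs_of_nonneg (ind_nonneg _ _)]
    exact mul_le_of_le_one_left (ind_nonneg _ _) (hf1 ω)
  have hfint : Integrable (fun ω => min (X ω) (Y ω) * ind S ω) P :=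
    bound _ (hXm.min hYm) (fun ω => le_min (hX0 ω) (hY0 ω))
      (fun ω => (min_le_left _ _).trans (hX1 ω))
  have hXSint : Integrable (fun ω => X ω * ind S ω) P := bound _ hXm hX0 hX1
  have hYSint : Integrable (fun ω => Y ω * ind S ω) P := bound _ hYm hY0 hY1
  have hXint : ∫ ω, X ω * ind S ω ∂P = condProb P A H * (P S).toReal :=
    integral_condEvent P hAm hHm hKm hH
  have hKH : K ∪ H = S := union_comm K H
  have hYint : ∫ ω, Y ω * ind S ω ∂P = condProb P B K * (P S).toReal := by
    rw [← hKH] at *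
    exact integral_condEvent P hBm hKm hHm hK
  constructor
  · -- lower bound
    rw [max_le_iff]
    constructor
    · rw [conjPrev, le_div_iff₀ hc]
      have hgint : Integrable (fun ω => X ω * ind S ω + Y ω * ind S ω - ind S ω) P :=
        (hXSint.add hYSint).sub (integrable_ind P hSm)
      have hmono : ∀ ω, X ω * ind S ω + Y ω * ind S ω - ind S ω
          ≤ min (X ω) (Y ω) * ind S ω := by
        intro ω
        by_cases h : ω ∈ S
        · have : ind S ω = 1 := by simp [ind_apply, h]
          rw [this]
          simp only [mul_one]
          exact le_min (by linarith [hY1 ω]) (by linarith [hX1 ω])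
        · have : ind S ω = 0 := by simp [ind_apply, h]
          simp [this]
      have h1 : Integrable (fun ω => X ω * ind S ω + Y ω * ind S ω) P :=
        hXSint.add hYSint
      calc (condProb P A H + condProb P B K - 1) * (P S).toReal
          = ∫ ω, (X ω * ind S ω + Y ω * ind S ω - ind S ω) ∂P := by
            rw [integral_sub h1 (integrable_ind P hSm),
              integral_add hXSint hYSint, hXint, hYint, integral_ind P hSm]
            ring
        _ ≤ ∫ ω, min (X ω) (Y ω) * ind S ω ∂P := integral_mono hgint hfint hmono
    · exact div_nonneg (integral_nonneg fun ω =>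
        mul_nonneg (le_min (hX0 ω) (hY0 ω)) (ind_nonneg _ _)) ENNReal.toReal_nonneg
  · -- upper bound
    rw [le_min_iff]
    constructor
    · rw [conjPrev, div_le_iff₀ hc, ← hXint]
      exact integral_mono hfint hXSint fun ω =>
        mul_le_mul_of_nonneg_right (min_le_left _ _) (ind_nonneg _ _)
    · rw [conjPrev, div_le_iff₀ hc, ← hYint]
      exact integral_mono hfint hYSint fun ω =>
        mul_le_mul_of_nonneg_right (min_le_right _ _) (ind_nonneg _ _)


end
end

section
/- If P(H) > 0, P(K) > 0, P(A∩H) > 0, and K ⊆ B, then the iterated conditional satisfies ⟦(B|K)|(A|H)⟧(ω) = 1 for every ω ∈ Ω; in particular its prevision μ equals 1. -/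
open MeasureTheory Set
open scoped Classical

noncomputable section

variable {Ω : Type*} [MeasurableSpace Ω]

/-- If `P(A∩H) > 0` and `K ⊆ B`, then the iterated conditional `⟦(B|K)|(A|H)⟧`
is constantly `1`; in particular its prevision `μ = z/P(A|H)` equals `1`. -/
theorem iterCond_eq_one_of_subset (P : Measure Ω) [IsProbabilityMeasure P]
    (A H B K : Set Ω)
    (hAm : MeasurableSet A) (hHm : MeasurableSet H)
    (hBm : MeasurableSet B) (hKm : MeasurableSet K)
    (hH : 0 < P H) (hK : 0 < P K) (hAH : 0 < P (A ∩ H))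
    (hKB : K ⊆ B) :
    (∀ ω, iterCond P A H B K ω = 1) ∧
      conjPrev P A H B K / condProb P A H = 1 := by
  -- basic positivity facts
  have hPHne : (P H).toReal ≠ 0 := (ENNReal.toReal_pos hH.ne' (measure_ne_top _ _)).ne'
  have hPAHpos : 0 < (P (A ∩ H)).toReal := ENNReal.toReal_pos hAH.ne' (measure_ne_top _ _)
  have hp : 0 < condProb P A H := div_pos hPAHpos (ENNReal.toReal_pos hH.ne' (measure_ne_top _ _))
  have hHK : 0 < (P (H ∪ K)).toReal := by
    refine ENNReal.toReal_pos ?_ (measure_ne_top _ _)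
    exact (lt_of_lt_of_le hH (measure_mono subset_union_left)).ne'
  -- condEvent P B K is constantly 1
  have hBKeq : ∀ ω, condEvent P B K ω = 1 := by
    intro ω
    have h1 : B ∩ K = K := inter_eq_right.mpr hKB
    have h2 : condProb P B K = 1 := by
      simp [condProb, h1, div_self (ENNReal.toReal_pos hK.ne' (measure_ne_top _ _)).ne']
    by_cases hω : ω ∈ K <;> simp [condEvent, h1, h2, ind, Set.indicator, hω]
  -- condEvent P A H ≤ 1
  have hle : ∀ ω, condEvent P A H ω ≤ 1 := by
    intro ω
    have hple : condProb P A H ≤ 1 := by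
      rw [condProb, div_le_one (ENNReal.toReal_pos hH.ne' (measure_ne_top _ _))]
      exact ENNReal.toReal_mono (measure_ne_top _ _) (measure_mono inter_subset_right)
    by_cases h1 : ω ∈ H <;> by_cases h2 : ω ∈ A <;>
      simp [condEvent, ind, Set.indicator, h1, h2, hple]
  have hmin : ∀ ω, min (condEvent P A H ω) (condEvent P B K ω) = condEvent P A H ω := by
    intro ω; rw [hBKeq ω]; exact min_eq_left (hle ω)
  -- pointwise formula for the integrand
  have hpt : ∀ ω, min (condEvent P A H ω) (condEvent P B K ω) * ind (H ∪ K) ω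
      = ind (A ∩ H) ω + condProb P A H * ind (Hᶜ ∩ K) ω := by
    intro ω
    rw [hmin ω]
    by_cases h1 : ω ∈ H <;> by_cases h2 : ω ∈ K <;> by_cases h3 : ω ∈ A <;>
      simp [condEvent, ind, Set.indicator, h1, h2, h3]
  -- the integral
  have hint : (∫ ω, min (condEvent P A H ω) (condEvent P B K ω) * ind (H ∪ K) ω ∂P)
      = (P (A ∩ H)).toReal + condProb P A H * (P (Hᶜ ∩ K)).toReal := by
    have hiA : Integrable (ind (A ∩ H)) P :=
      (integrable_const (1 : ℝ)).indicator (hAm.inter hHm)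
    have hiB : Integrable (fun ω => condProb P A H * ind (Hᶜ ∩ K) ω) P :=
      ((integrable_const (1 : ℝ)).indicator (hHm.compl.inter hKm)).const_mul _
    calc (∫ ω, min (condEvent P A H ω) (condEvent P B K ω) * ind (H ∪ K) ω ∂P)
        = ∫ ω, (ind (A ∩ H) ω + condProb P A H * ind (Hᶜ ∩ K) ω) ∂P := by
          exact integral_congr_ae (Filter.Eventually.of_forall hpt)
      _ = (∫ ω, ind (A ∩ H) ω ∂P) + ∫ ω, condProb P A H * ind (Hᶜ ∩ K) ω ∂P :=
          integral_add hiA hiB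
      _ = (P (A ∩ H)).toReal + condProb P A H * (P (Hᶜ ∩ K)).toReal := by
          rw [integral_const_mul]
          have e1 : (∫ ω, ind (A ∩ H) ω ∂P) = (P (A ∩ H)).toReal := by
            simp only [ind]; exact integral_indicator_one (hAm.inter hHm)
          have e2 : (∫ ω, ind (Hᶜ ∩ K) ω ∂P) = (P (Hᶜ ∩ K)).toReal := by
            simp only [ind]; exact integral_indicator_one (hHm.compl.inter hKm)
          rw [e1, e2]
  -- measure split
  have hsplit : (P (H ∪ K)).toReal = (P H).toReal + (P (Hᶜ ∩ K)).toReal := by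
    have hU : H ∪ K = H ∪ (Hᶜ ∩ K) := by
      ext ω; by_cases h : ω ∈ H <;> simp [h]
    have hd : Disjoint H (Hᶜ ∩ K) :=
      Disjoint.mono_right inter_subset_left disjoint_compl_right
    rw [hU, measure_union hd (hHm.compl.inter hKm),
      ENNReal.toReal_add (measure_ne_top _ _) (measure_ne_top _ _)]
  -- z = p
  have hz : conjPrev P A H B K = condProb P A H := by
    rw [conjPrev, hint, hsplit]
    have hpH : (P (A ∩ H)).toReal = condProb P A H * (P H).toReal := by
      rw [condProb]; field_simp
    rw [hpH, ← mul_add, mul_div_assoc,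
      div_self (by rw [← hsplit]; exact hHK.ne'), mul_one]
  have hmu : conjPrev P A H B K / condProb P A H = 1 := by
    rw [hz, div_self hp.ne']
  refine ⟨?_, hmu⟩
  intro ω
  rw [iterCond, conjCE, hmin ω, hz, div_self hp.ne', one_mul]
  by_cases h : ω ∈ H ∪ K
  · have h1 : ind (H ∪ K) ω = 1 := by
      rw [ind, Set.indicator_of_mem h]; rfl
    have h2 : ind (H ∪ K)ᶜ ω = 0 := by
      rw [ind, Set.indicator_of_notMem (notMem_compl_iff.mpr h)]
    rw [h1, h2]; ring
  · have h1 : ind (H ∪ K) ω = 0 := by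
      rw [ind, Set.indicator_of_notMem h]
    have h2 : ind (H ∪ K)ᶜ ω = 1 := by
      rw [ind, Set.indicator_of_mem (mem_compl h)]; rfl
    have hωH : ω ∉ H := fun hh => h (Or.inl hh)
    have hce : condEvent P A H ω = condProb P A H := by
      have h3 : ω ∉ A ∩ H := fun hh => hωH hh.2
      simp [condEvent, ind, Set.indicator_of_notMem h3,
        Set.indicator_of_mem (show ω ∈ Hᶜ from hωH)]
    rw [h1, h2, hce]; ring

end
end

section
/- Modus ponens: for events A, C with P(A) > 0, the conjunction satisfies ⟦(C|A)∧(A|Ω)⟧(ω) = 1_{A∩C}(ω) for every ω ∈ Ω; moreover, if P(A∩C) > 0, then the iterated conditional of C|Ω given the conditional event (A∩C)|Ω satisfies ⟦(C|Ω)|((A∩C)|Ω)⟧(ω) = 1 for every ω ∈ Ω. -/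
open MeasureTheory Set
open scoped Classical

noncomputable section

variable {Ω : Type*} [MeasurableSpace Ω]

/-- Modus ponens: `⟦(C|A)∧(A|Ω)⟧ = 1_{A∩C}` pointwise; moreover, if
`P(A∩C) > 0`, then `⟦(C|Ω)|((A∩C)|Ω)⟧` is constantly `1`. -/
theorem modus_ponens (P : Measure Ω) [IsProbabilityMeasure P]
    (A C : Set Ω) (hAm : MeasurableSet A) (hCm : MeasurableSet C)
    (hA : 0 < P A) :
    (∀ ω, conjCE P C A A Set.univ ω = ind (A ∩ C) ω) ∧
      (0 < P (A ∩ C) → ∀ ω, iterCond P (A ∩ C) Set.univ C Set.univ ω = 1) := by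
  have indmem : ∀ (S : Set Ω) ω, ω ∈ S → ind S ω = 1 := by
    intro S ω h; simp [ind, indicator_of_mem h]
  have indnot : ∀ (S : Set Ω) ω, ω ∉ S → ind S ω = 0 := by
    intro S ω h; simp [ind, indicator_of_notMem h]
  have indnn : ∀ (S : Set Ω) ω, 0 ≤ ind S ω := by
    intro S ω; by_cases h : ω ∈ S
    · rw [indmem S ω h]; norm_num
    · rw [indnot S ω h]
  have indle : ∀ (S : Set Ω) ω, ind S ω ≤ 1 := by
    intro S ω; by_cases h : ω ∈ S
    · rw [indmem S ω h]
    · rw [indnot S ω h]; norm_num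
  have cpnn : ∀ (X H : Set Ω), 0 ≤ condProb P X H := by
    intro X H; exact div_nonneg ENNReal.toReal_nonneg ENNReal.toReal_nonneg
  have hemp : ∀ x : Ω, ind (∅ : Set Ω) x = 0 := fun x => indnot _ x (by simp)
  have hUniv : ∀ x : Ω, ind (univ : Set Ω) x = 1 := fun x => indmem _ x (by simp)
  constructor
  · intro ω
    have hu : ind (A ∪ (univ : Set Ω)) ω = 1 := indmem _ ω (by simp)
    have hu' : ind (A ∪ (univ : Set Ω))ᶜ ω = 0 := indnot _ ω (by simp)
    have hAu : condEvent P A univ ω = ind A ω := by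
      simp [condEvent, indnot _ ω (show ω ∉ (univ : Set Ω)ᶜ by simp), hemp]
    by_cases hω : ω ∈ A
    · have h1 : condEvent P C A ω = ind (C ∩ A) ω := by
        simp [condEvent, indnot Aᶜ ω (by simpa using hω)]
      have : min (condEvent P C A ω) (condEvent P A univ ω) = ind (C ∩ A) ω := by
        rw [h1, hAu, indmem A ω hω, min_eq_left (indle _ _)]
      simp [conjCE, hu, hu', this, inter_comm A C, hemp, hUniv]
    · have h1 : min (condEvent P C A ω) (condEvent P A univ ω) = 0 := by
        rw [hAu, indnot A ω hω]
        have : 0 ≤ condEvent P C A ω := by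
          simp only [condEvent]
          exact add_nonneg (indnn _ _) (mul_nonneg (cpnn _ _) (indnn _ _))
        exact min_eq_right this
      have h2 : ind (A ∩ C) ω = 0 := indnot _ ω (fun h => hω h.1)
      simp [conjCE, hu, hu', h1, h2, hemp, hUniv]
  · intro hAC ω
    have hmin : ∀ x, min (condEvent P (A ∩ C) univ x) (condEvent P C univ x)
        = ind (A ∩ C) x := by
      intro x
      have h1 : condEvent P (A ∩ C) univ x = ind (A ∩ C) x := by
        simp [condEvent, indnot _ x (show x ∉ (univ : Set Ω)ᶜ by simp), hemp]
      have h2 : condEvent P C univ x = ind C x := by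
        simp [condEvent, indnot _ x (show x ∉ (univ : Set Ω)ᶜ by simp), hemp]
      rw [h1, h2]
      by_cases hx : x ∈ A ∩ C
      · rw [indmem _ _ hx, indmem _ _ hx.2]; simp
      · rw [indnot _ _ hx]; exact min_eq_left (indnn _ _)
    have hz : conjPrev P (A ∩ C) univ C univ = (P (A ∩ C)).toReal := by
      have : (fun x => min (condEvent P (A ∩ C) univ x) (condEvent P C univ x)
          * ind ((univ : Set Ω) ∪ univ) x) = ind (A ∩ C) := by
        funext x; rw [hmin x, indmem (univ ∪ univ) x (by simp), mul_one]
      rw [conjPrev, this]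
      simp [ind, MeasureTheory.integral_indicator_one (hAm.inter hCm), measureReal_def]
    have hcp : condProb P (A ∩ C) univ = (P (A ∩ C)).toReal := by
      simp [condProb]
    have hpos : (0:ℝ) < (P (A ∩ C)).toReal :=
      ENNReal.toReal_pos hAC.ne' (measure_ne_top P _)
    have hce : condEvent P (A ∩ C) univ ω = ind (A ∩ C) ω := by
      simp [condEvent, indnot _ ω (show ω ∉ (univ : Set Ω)ᶜ by simp), hemp, hUniv]
    have hconj : conjCE P (A ∩ C) univ C univ ω = ind (A ∩ C) ω := by
      simp only [conjCE]
      rw [hmin ω, indmem (univ ∪ univ) ω (by simp),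
        indnot (univ ∪ univ)ᶜ ω (by simp), mul_one, mul_zero, add_zero]
    simp only [iterCond, hconj, hz, hcp, hce, div_self hpos.ne', one_mul]
    ring

end
end

section
/- Modus tollens: for events A, C with P(A) > 0, setting x := P(C|A), the conjunction satisfies X(ω) = x·1_{Aᶜ∩Cᶜ}(ω) for every ω ∈ Ω; moreover, if x > 0 and P(Aᶜ∩Cᶜ) > 0, then the iterated conditional satisfies ⟦(Aᶜ|Ω)|((C|A)∧(Cᶜ|Ω))⟧(ω) = 1 for every ω ∈ Ω. -/
open MeasureTheory Set
open scoped Classical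

noncomputable section

variable {Ω : Type*} [MeasurableSpace Ω]

/-- Modus tollens: the triple conjunction `T = min(1_{Aᶜ}, ⟦C|A⟧, 1_{Cᶜ})`
(the union of the conditioning events is `Ω`). -/
def mtT (P : Measure Ω) (A C : Set Ω) : Ω → ℝ :=
  fun ω => min (ind Aᶜ ω) (min (condEvent P C A ω) (ind Cᶜ ω))

/-- Modus tollens: the iterated conditional `⟦(Aᶜ|Ω)|((C|A)∧(Cᶜ|Ω))⟧
= T + (E[T]/E[X])·(1 − X)` where `X = ⟦(C|A)∧(Cᶜ|Ω)⟧`. -/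
def mtIter (P : Measure Ω) (A C : Set Ω) : Ω → ℝ :=
  fun ω => mtT P A C ω +
    ((∫ ω', mtT P A C ω' ∂P) / (∫ ω', conjCE P C A Cᶜ Set.univ ω' ∂P)) *
      (1 - conjCE P C A Cᶜ Set.univ ω)

/-- Modus tollens: with `x = P(C|A)`, the conjunction
`X = ⟦(C|A)∧(Cᶜ|Ω)⟧` equals `x·1_{Aᶜ∩Cᶜ}` pointwise; moreover, if `x > 0` and
`P(Aᶜ∩Cᶜ) > 0`, then `⟦(Aᶜ|Ω)|((C|A)∧(Cᶜ|Ω))⟧` is constantly `1`. -/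
theorem modus_tollens (P : Measure Ω) [IsProbabilityMeasure P]
    (A C : Set Ω) (hAm : MeasurableSet A) (hCm : MeasurableSet C)
    (hA : 0 < P A) :
    (∀ ω, conjCE P C A Cᶜ Set.univ ω = condProb P C A * ind (Aᶜ ∩ Cᶜ) ω) ∧
      (0 < condProb P C A → 0 < P (Aᶜ ∩ Cᶜ) → ∀ ω, mtIter P A C ω = 1) := by
  have hx0 : 0 ≤ condProb P C A := div_nonneg ENNReal.toReal_nonneg ENNReal.toReal_nonneg
  have hx1 : condProb P C A ≤ 1 := by
    apply div_le_one_of_le₀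
    · exact ENNReal.toReal_mono (measure_ne_top P A) (measure_mono inter_subset_right)
    · exact ENNReal.toReal_nonneg
  have hX : ∀ ω, conjCE P C A Cᶜ Set.univ ω = condProb P C A * ind (Aᶜ ∩ Cᶜ) ω := by
    intro ω
    simp only [conjCE, condEvent, ind]
    by_cases hA' : ω ∈ A <;> by_cases hC' : ω ∈ C <;>
      simp [indicator_apply, hA', hC', hx0, min_eq_left, hx1, min_eq_right]
  refine ⟨hX, fun hx hS ω => ?_⟩
  have hT : ∀ ω, mtT P A C ω = condProb P C A * ind (Aᶜ ∩ Cᶜ) ω := by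
    intro ω
    simp only [mtT, condEvent, ind]
    by_cases hA' : ω ∈ A <;> by_cases hC' : ω ∈ C <;>
      simp [indicator_apply, hA', hC', hx0, min_eq_left, hx1, min_eq_right]
  have hSm : MeasurableSet (Aᶜ ∩ Cᶜ) := hAm.compl.inter hCm.compl
  have hint : (∫ ω', condProb P C A * ind (Aᶜ ∩ Cᶜ) ω' ∂P)
      = condProb P C A * (P (Aᶜ ∩ Cᶜ)).toReal := by
    rw [MeasureTheory.integral_const_mul]
    congr 1
    simpa [ind, measureReal_def] using MeasureTheory.integral_indicator_one hSm
  have hpos : 0 < condProb P C A * (P (Aᶜ ∩ Cᶜ)).toReal :=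
    mul_pos hx (ENNReal.toReal_pos hS.ne' (measure_ne_top P _))
  have hIT : (∫ ω', mtT P A C ω' ∂P) = condProb P C A * (P (Aᶜ ∩ Cᶜ)).toReal := by
    rw [← hint]; exact integral_congr_ae (Filter.Eventually.of_forall hT)
  have hIX : (∫ ω', conjCE P C A Cᶜ Set.univ ω' ∂P)
      = condProb P C A * (P (Aᶜ ∩ Cᶜ)).toReal := by
    rw [← hint]; exact integral_congr_ae (Filter.Eventually.of_forall hX)
  simp only [mtIter, hT, hX, hIT, hIX, hint, div_self hpos.ne']
  ring

end
end
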